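/- Assume (F1) and 0 < −αc < h_0. Then for every u ∈ X∖{0} the map t ↦ λ_c(tu), t > 0, has exactly two critical points t_c^+(u) < t_c^-(u), with t_c^+(u) a local minimum point and t_c^-(u) a local maximum point; the maps u ↦ t_c^±(u) are bounded away from zero on the unit sphere S and bounded above on every compact subset of S; and the Nehari set N(λ_c) is bounded away from zero, i.e. inf_{u ∈ N(λ_c)} ‖u‖ > 0. -/

import Mathlib

open Metric Set Filter Topology

/-- `H(u) = I₁'(u)u − α I₁(u)`. -/
noncomputable def Hfun {X : Type*} [NormedAddCommGroup X] [NormedSpace ℝ X]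
    (I1 : X → ℝ) (α : ℝ) (u : X) : ℝ :=
  fderiv ℝ I1 u u - α * I1 u

/-- `h₀ = inf_{u ≠ 0} sup_{t > 0} H(t u)`. -/
noncomputable def groundLevelH {X : Type*} [NormedAddCommGroup X] [NormedSpace ℝ X]
    (I1 : X → ℝ) (α : ℝ) : ℝ :=
  sInf ((fun u : X => sSup ((fun t : ℝ => Hfun I1 α (t • u)) '' Set.Ioi (0 : ℝ))) ''
    {u : X | u ≠ 0})

/-- `λ_c(u) = (I₁(u) − c) / I₂(u)`. -/
noncomputable def lamFun {X : Type*} [NormedAddCommGroup X] [NormedSpace ℝ X]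
    (I1 I2 : X → ℝ) (c : ℝ) (u : X) : ℝ :=
  (I1 u - c) / I2 u

/-- The Nehari set `N(λ_c) = {u ≠ 0 : H(u) + α c = 0}`. -/
noncomputable def nehariSet {X : Type*} [NormedAddCommGroup X] [NormedSpace ℝ X]
    (I1 : X → ℝ) (α c : ℝ) : Set X :=
  {u : X | u ≠ 0 ∧ Hfun I1 α u + α * c = 0}

/-- under (F1) and `0 < −αc < h₀`, every fibering map `t ↦ λ_c(tu)` has
exactly two critical points `t_c⁺(u) < t_c⁻(u)` (a local minimum followed by a local
maximum), the maps `t_c^±` are bounded away from zero on the unit sphere and bounded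
above on its compact subsets, and `N(λ_c)` is bounded away from zero. -/
theorem statement_5
    {X : Type*} [NormedAddCommGroup X] [NormedSpace ℝ X] [CompleteSpace X]
    [UniformConvexSpace X]
    (hinf : ¬ FiniteDimensional ℝ X)
    (hnorm : ContDiffOn ℝ 1 (fun x : X => ‖x‖) {x : X | x ≠ 0})
    (I1 I2 : X → ℝ) (α c : ℝ)
    (hI1C1 : ContDiff ℝ 1 I1) (hI2C1 : ContDiff ℝ 1 I2)
    (hI10 : I1 0 = 0) (hI20 : I2 0 = 0)
    (hI2pos : ∀ u : X, u ≠ 0 → 0 < I2 u)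
    (hα : 1 < α)
    (hI2hom : ∀ t : ℝ, 0 < t → ∀ u : X, I2 (t • u) = t ^ α * I2 u)
    -- `I₂'` is completely continuous
    (hI2cc : ∀ (u : ℕ → X) (w : X),
      (∀ f : X →L[ℝ] ℝ, Tendsto (fun n => f (u n)) atTop (nhds (f w))) →
      Tendsto (fun n => fderiv ℝ I2 (u n)) atTop (nhds (fderiv ℝ I2 w)))
    -- (F1)
    (s : X → ℝ)
    (hF1pos : ∀ u : X, u ≠ 0 → 0 < s u)
    (hF1inc : ∀ u : X, u ≠ 0 →
      StrictMonoOn (fun t : ℝ => Hfun I1 α (t • u)) (Set.Ioc 0 (s u)))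
    (hF1dec : ∀ u : X, u ≠ 0 →
      StrictAntiOn (fun t : ℝ => Hfun I1 α (t • u)) (Set.Ici (s u)))
    (hF1unif : ∀ W : Set X, W ⊆ {u : X | u ≠ 0} → IsCompact (toWeakSpace ℝ X '' W) →
      ∀ M : ℝ, ∃ T : ℝ, ∀ t : ℝ, T ≤ t → ∀ u ∈ W, Hfun I1 α (t • u) < M)
    -- `0 < −αc < h₀`
    (hc0 : 0 < -(α * c)) (hch : -(α * c) < groundLevelH I1 α) :
    ∃ tcp tcm : X → ℝ,
      (∀ u : X, u ≠ 0 →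
        0 < tcp u ∧ tcp u < tcm u ∧
        IsLocalMin (fun t : ℝ => lamFun I1 I2 c (t • u)) (tcp u) ∧
        IsLocalMax (fun t : ℝ => lamFun I1 I2 c (t • u)) (tcm u) ∧
        (∀ t : ℝ, 0 < t →
          (deriv (fun r : ℝ => lamFun I1 I2 c (r • u)) t = 0 ↔ t = tcp u ∨ t = tcm u))) ∧
      (∃ a : ℝ, 0 < a ∧ ∀ u ∈ sphere (0 : X) 1, a ≤ tcp u ∧ a ≤ tcm u) ∧
      (∀ K : Set X, K ⊆ sphere (0 : X) 1 → IsCompact K →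
        ∃ b : ℝ, ∀ u ∈ K, tcp u ≤ b ∧ tcm u ≤ b) ∧
      0 < sInf ((fun u : X => ‖u‖) '' nehariSet I1 α c) := by
  classical
  set β := -(α * c) with hβdef
  -- continuity of H
  have hHcont : Continuous (Hfun I1 α) := by
    unfold Hfun
    exact (isBoundedBilinearMap_apply.continuous.comp
      ((hI1C1.continuous_fderiv one_ne_zero).prodMk continuous_id)).sub
      (continuous_const.mul hI1C1.continuous)
  have hH0 : Hfun I1 α 0 = 0 := by simp [Hfun, hI10]
  have hgcont : ∀ u : X, Continuous (fun t : ℝ => Hfun I1 α (t • u)) :=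
    fun u => hHcont.comp (continuous_id.smul continuous_const)
  -- small norm ⇒ H < β
  obtain ⟨δ, hδ0, hδ⟩ : ∃ δ > 0, ∀ v : X, ‖v‖ < δ → Hfun I1 α v < β := by
    have hc : ContinuousAt (Hfun I1 α) 0 := hHcont.continuousAt
    obtain ⟨d, hd0, hd⟩ := Metric.continuousAt_iff.mp hc β hc0
    refine ⟨d, hd0, fun v hv => ?_⟩
    have h2 := @hd v (by simpa [dist_eq_norm] using hv)
    rw [hH0] at h2
    have habs : |Hfun I1 α v| < β := by simpa [Real.dist_eq] using h2
    calc Hfun I1 α v ≤ |Hfun I1 α v| := le_abs_self _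
      _ < β := habs
  -- H(t u) → 0 as t → 0
  have h0lim : ∀ u : X, Tendsto (fun t : ℝ => Hfun I1 α (t • u)) (nhds 0) (nhds 0) := by
    intro u
    have h := (hgcont u).tendsto 0
    simpa [hH0] using h
  -- eventual decay along rays
  have hT : ∀ u : X, u ≠ 0 → ∀ M : ℝ, ∃ T : ℝ, ∀ t : ℝ, T ≤ t → Hfun I1 α (t • u) < M := by
    intro u hu M
    obtain ⟨T, hTT⟩ := hF1unif {u} (Set.singleton_subset_iff.mpr hu)
      (by rw [Set.image_singleton]; exact isCompact_singleton) M
    exact ⟨T, fun t ht => hTT t ht u rfl⟩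
  -- max of the fibering H along a ray is at s u
  have hmax : ∀ u : X, u ≠ 0 → ∀ t : ℝ, 0 < t →
      Hfun I1 α (t • u) ≤ Hfun I1 α (s u • u) := by
    intro u hu t ht
    rcases le_or_gt t (s u) with h | h
    · rcases eq_or_lt_of_le h with h' | h'
      · rw [h']
      · exact le_of_lt ((hF1inc u hu) ⟨ht, h⟩ ⟨hF1pos u hu, le_refl _⟩ h')
    · exact le_of_lt ((hF1dec u hu) (Set.self_mem_Ici) (le_of_lt h) h)
  have hsup : ∀ u : X, u ≠ 0 →
      sSup ((fun t : ℝ => Hfun I1 α (t • u)) '' Set.Ioi (0:ℝ)) = Hfun I1 α (s u • u) := by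
    intro u hu
    apply le_antisymm
    · refine csSup_le ⟨Hfun I1 α ((1:ℝ) • u), Set.mem_image_of_mem _ (Set.mem_Ioi.mpr one_pos)⟩ ?_
      rintro y ⟨t, ht, rfl⟩
      exact hmax u hu t ht
    · apply le_csSup
      · refine ⟨Hfun I1 α (s u • u), ?_⟩
        rintro y ⟨t, ht, rfl⟩
        exact hmax u hu t ht
      · exact ⟨s u, hF1pos u hu, rfl⟩
  have hmax0 : ∀ u : X, u ≠ 0 → 0 ≤ Hfun I1 α (s u • u) := by
    intro u hu
    have hev : ∀ᶠ t in nhdsWithin (0:ℝ) (Set.Ioi 0),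
        Hfun I1 α (t • u) ≤ Hfun I1 α (s u • u) := by
      filter_upwards [self_mem_nhdsWithin] with t ht
      exact hmax u hu t ht
    exact le_of_tendsto ((h0lim u).mono_left nhdsWithin_le_nhds) hev
  have hβmax : ∀ u : X, u ≠ 0 → β < Hfun I1 α (s u • u) := by
    intro u hu
    have h1 : groundLevelH I1 α ≤ Hfun I1 α (s u • u) := by
      rw [← hsup u hu]
      apply csInf_le
      · refine ⟨0, ?_⟩
        rintro y ⟨v, hv, rfl⟩
        dsimp only
        rw [hsup v hv]
        exact hmax0 v hv
      · exact ⟨u, hu, rfl⟩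
    exact lt_of_lt_of_le hch h1
  -- the derivative of the fibering map
  have hDeriv : ∀ u : X, u ≠ 0 → ∀ t : ℝ, 0 < t →
      HasDerivAt (fun r : ℝ => lamFun I1 I2 c (r • u))
        ((Hfun I1 α (t • u) + α * c) / (t ^ (α + 1) * I2 u)) t := by
    intro u hu t ht
    have hI2u := hI2pos u hu
    have hsmul : ∀ J : X → ℝ, ContDiff ℝ 1 J →
        HasDerivAt (fun r : ℝ => J (r • u)) (fderiv ℝ J (t • u) u) t := by
      intro J hJ
      have h1 : HasDerivAt (fun r : ℝ => r • u) u t := by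
        simpa using (hasDerivAt_id t).smul_const u
      exact ((hJ.differentiable one_ne_zero) (t • u)).hasFDerivAt.comp_hasDerivAt t h1
    have hF : HasDerivAt (fun r : ℝ => I1 (r • u) - c) (fderiv ℝ I1 (t • u) u) t :=
      (hsmul I1 hI1C1).sub_const c
    have hG0 : HasDerivAt (fun r : ℝ => r ^ α * I2 u) (α * t ^ (α - 1) * I2 u) t := by
      simpa [mul_comm, mul_assoc] using
        (Real.hasDerivAt_rpow_const (p := α) (Or.inl ht.ne')).mul_const (I2 u)
    have hGeq : (fun r : ℝ => I2 (r • u)) =ᶠ[nhds t] (fun r : ℝ => r ^ α * I2 u) := by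
      filter_upwards [Ioi_mem_nhds ht] with r hr
      exact hI2hom r hr u
    have hG : HasDerivAt (fun r : ℝ => I2 (r • u)) (α * t ^ (α - 1) * I2 u) t :=
      hG0.congr_of_eventuallyEq hGeq
    have hI2v : I2 (t • u) = t ^ α * I2 u := hI2hom t ht u
    have hI2vne : I2 (t • u) ≠ 0 := by
      rw [hI2v]
      positivity
    have hdiv := hF.div hG hI2vne
    have heq : (fderiv ℝ I1 (t • u) u * I2 (t • u) -
          (I1 (t • u) - c) * (α * t ^ (α - 1) * I2 u)) / I2 (t • u) ^ 2
        = (Hfun I1 α (t • u) + α * c) / (t ^ (α + 1) * I2 u) := by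
      have hsm : Hfun I1 α (t • u) = t * fderiv ℝ I1 (t • u) u - α * I1 (t • u) := by
        unfold Hfun
        rw [show ((t : ℝ) • u) = t • u from rfl, (fderiv ℝ I1 (t • u)).map_smul, smul_eq_mul]
      rw [hI2v, hsm]
      have hA : (0:ℝ) < t ^ (α - 1) := Real.rpow_pos_of_pos ht _
      have h1 : t ^ α = t ^ (α - 1) * t := by
        rw [← Real.rpow_add_one ht.ne']; ring_nf
      have h2 : t ^ (α + 1) = t ^ (α - 1) * t * t := by
        rw [← Real.rpow_add_one ht.ne', ← Real.rpow_add_one ht.ne']; ring_nf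
      rw [h1, h2]
      field_simp
      ring
    rw [heq] at hdiv
    exact hdiv
  have hderiv_eq : ∀ u : X, u ≠ 0 → ∀ t : ℝ, 0 < t →
      deriv (fun r : ℝ => lamFun I1 I2 c (r • u)) t
        = (Hfun I1 α (t • u) + α * c) / (t ^ (α + 1) * I2 u) :=
    fun u hu t ht => (hDeriv u hu t ht).deriv
  -- continuity of the fibering map on (0, ∞)
  have hφcont : ∀ u : X, u ≠ 0 →
      ContinuousOn (fun t : ℝ => lamFun I1 I2 c (t • u)) (Set.Ioi 0) := by
    intro u hu
    simp only [lamFun]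
    exact ((hI1C1.continuous.comp (continuous_id.smul continuous_const)).sub
        continuous_const).continuousOn.div
      (hI2C1.continuous.comp (continuous_id.smul continuous_const)).continuousOn
      (fun t ht => (hI2pos _ (smul_ne_zero (ne_of_gt ht) hu)).ne')
  -- existence of the two roots
  have exspec : ∀ u : X, ∃ q : ℝ × ℝ, u ≠ 0 →
      0 < q.1 ∧ q.1 < s u ∧ s u < q.2 ∧
      Hfun I1 α (q.1 • u) = β ∧ Hfun I1 α (q.2 • u) = β ∧
      (∀ t : ℝ, 0 < t → Hfun I1 α (t • u) = β → t = q.1 ∨ t = q.2) := by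
    intro u
    by_cases hu : u ≠ 0
    swap
    · exact ⟨(1, 2), fun h => absurd h hu⟩
    have hev : ∀ᶠ t in nhdsWithin (0:ℝ) (Set.Ioi 0),
        (Hfun I1 α (t • u) < β ∧ t < s u) ∧ 0 < t := by
      refine Filter.Eventually.and (Filter.Eventually.filter_mono nhdsWithin_le_nhds ?_)
        self_mem_nhdsWithin
      exact Filter.Eventually.and ((h0lim u).eventually_lt_const hc0)
        (eventually_lt_nhds (hF1pos u hu))
    obtain ⟨ε, ⟨hεβ, hεs⟩, hε0⟩ := hev.exists
    have hivt1 : β ∈ (fun t : ℝ => Hfun I1 α (t • u)) '' Set.Ioo ε (s u) :=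
      intermediate_value_Ioo (le_of_lt hεs) (hgcont u).continuousOn ⟨hεβ, hβmax u hu⟩
    obtain ⟨tp, htpmem, htpβ⟩ := hivt1
    obtain ⟨T, hTp⟩ := hT u hu β
    have hsT' : s u < max T (s u + 1) := lt_of_lt_of_le (lt_add_one _) (le_max_right _ _)
    have hgT' : Hfun I1 α ((max T (s u + 1)) • u) < β := hTp _ (le_max_left _ _)
    have hivt2 : β ∈ (fun t : ℝ => Hfun I1 α (t • u)) '' Set.Ioo (s u) (max T (s u + 1)) :=
      intermediate_value_Ioo' (le_of_lt hsT') (hgcont u).continuousOn ⟨hgT', hβmax u hu⟩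
    obtain ⟨tm, htmmem, htmβ⟩ := hivt2
    refine ⟨(tp, tm), fun _ => ⟨lt_trans hε0 htpmem.1, htpmem.2, htmmem.1, htpβ, htmβ, ?_⟩⟩
    intro t ht htβ
    rcases le_or_gt t (s u) with hts | hts
    · left
      refine (hF1inc u hu).injOn ⟨ht, hts⟩
        ⟨lt_trans hε0 htpmem.1, le_of_lt htpmem.2⟩ ?_
      dsimp only
      have htβ' : Hfun I1 α (t • u) = β := htβ
      have htpβ' : Hfun I1 α (tp • u) = β := htpβ
      rw [htβ', htpβ']
    · right
      refine (hF1dec u hu).injOn (le_of_lt hts) (le_of_lt htmmem.1) ?_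
      dsimp only
      have htβ' : Hfun I1 α (t • u) = β := htβ
      have htmβ' : Hfun I1 α (tm • u) = β := htmβ
      rw [htβ', htmβ']
  choose q hq using exspec
  refine ⟨fun u => (q u).1, fun u => (q u).2, ?_, ?_, ?_, ?_⟩
  · -- two critical points, local min then local max
    intro u hu
    obtain ⟨htp0, htps, hstm, hgtp, hgtm, huniq⟩ := hq u hu
    have htptm : (q u).1 < (q u).2 := lt_trans htps hstm
    have hI2u := hI2pos u hu
    have hneg1 : ∀ t ∈ Set.Ioo (0:ℝ) (q u).1,
        deriv (fun r : ℝ => lamFun I1 I2 c (r • u)) t < 0 := by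
      intro t ht
      rw [hderiv_eq u hu t ht.1]
      apply div_neg_of_neg_of_pos
      · have h0 := (hF1inc u hu) ⟨ht.1, le_of_lt (lt_trans ht.2 htps)⟩
          ⟨htp0, le_of_lt htps⟩ ht.2
        have h : Hfun I1 α (t • u) < Hfun I1 α ((q u).1 • u) := h0
        rw [hgtp, hβdef] at h
        linarith
      · have := Real.rpow_pos_of_pos ht.1 (α + 1)
        positivity
    have hpos2 : ∀ t ∈ Set.Ioo (q u).1 (q u).2,
        0 < deriv (fun r : ℝ => lamFun I1 I2 c (r • u)) t := by
      intro t ht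
      have ht0 : 0 < t := lt_trans htp0 ht.1
      rw [hderiv_eq u hu t ht0]
      apply div_pos
      · rcases le_or_gt t (s u) with hts | hts
        · have h0 := (hF1inc u hu) ⟨htp0, le_of_lt htps⟩ ⟨ht0, hts⟩ ht.1
          have h : Hfun I1 α ((q u).1 • u) < Hfun I1 α (t • u) := h0
          rw [hgtp, hβdef] at h
          linarith
        · have h0 := (hF1dec u hu) (le_of_lt hts) (le_of_lt (lt_trans hts ht.2)) ht.2
          have h : Hfun I1 α ((q u).2 • u) < Hfun I1 α (t • u) := h0
          rw [hgtm, hβdef] at h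
          linarith
      · have := Real.rpow_pos_of_pos ht0 (α + 1)
        positivity
    have hneg3 : ∀ t ∈ Set.Ioi (q u).2,
        deriv (fun r : ℝ => lamFun I1 I2 c (r • u)) t < 0 := by
      intro t ht
      have ht0 : 0 < t := lt_trans (lt_trans htp0 htptm) ht
      rw [hderiv_eq u hu t ht0]
      apply div_neg_of_neg_of_pos
      · have h0 := (hF1dec u hu) (le_of_lt hstm) (le_of_lt (lt_trans hstm ht)) ht
        have h : Hfun I1 α (t • u) < Hfun I1 α ((q u).2 • u) := h0
        rw [hgtm, hβdef] at h
        linarith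
      · have := Real.rpow_pos_of_pos ht0 (α + 1)
        positivity
    have hc1 : ContinuousOn (fun t : ℝ => lamFun I1 I2 c (t • u))
        (Set.Icc ((q u).1 / 2) (q u).1) := by
      apply (hφcont u hu).mono
      intro x hx
      exact lt_of_lt_of_le (half_pos htp0) hx.1
    have hc2 : ContinuousOn (fun t : ℝ => lamFun I1 I2 c (t • u))
        (Set.Icc (q u).1 (q u).2) := by
      apply (hφcont u hu).mono
      intro x hx
      exact lt_of_lt_of_le htp0 hx.1
    have hc3 : ContinuousOn (fun t : ℝ => lamFun I1 I2 c (t • u))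
        (Set.Icc (q u).2 ((q u).2 + 1)) := by
      apply (hφcont u hu).mono
      intro x hx
      exact lt_of_lt_of_le (lt_trans htp0 htptm) hx.1
    have hmono1 : StrictAntiOn (fun t : ℝ => lamFun I1 I2 c (t • u))
        (Set.Icc ((q u).1 / 2) (q u).1) := by
      apply strictAntiOn_of_deriv_neg (convex_Icc _ _) hc1
      intro x hx
      rw [interior_Icc] at hx
      exact hneg1 x ⟨lt_trans (half_pos htp0) hx.1, hx.2⟩
    have hmono2 : StrictMonoOn (fun t : ℝ => lamFun I1 I2 c (t • u))
        (Set.Icc (q u).1 (q u).2) := by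
      apply strictMonoOn_of_deriv_pos (convex_Icc _ _) hc2
      intro x hx
      rw [interior_Icc] at hx
      exact hpos2 x hx
    have hmono3 : StrictAntiOn (fun t : ℝ => lamFun I1 I2 c (t • u))
        (Set.Icc (q u).2 ((q u).2 + 1)) := by
      apply strictAntiOn_of_deriv_neg (convex_Icc _ _) hc3
      intro x hx
      rw [interior_Icc] at hx
      exact hneg3 x hx.1
    refine ⟨htp0, htptm, ?_, ?_, ?_⟩
    · -- local min
      have hnb : Set.Ioo ((q u).1 / 2) (q u).2 ∈ nhds (q u).1 :=
        Ioo_mem_nhds (half_lt_self htp0) htptm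
      filter_upwards [hnb] with t ht
      rcases le_total t (q u).1 with h | h
      · exact hmono1.antitoneOn ⟨le_of_lt ht.1, h⟩
          ⟨le_of_lt (half_lt_self htp0), le_refl _⟩ h
      · exact hmono2.monotoneOn ⟨le_refl _, le_of_lt htptm⟩ ⟨h, le_of_lt ht.2⟩ h
    · -- local max
      have hnb : Set.Ioo (q u).1 ((q u).2 + 1) ∈ nhds (q u).2 :=
        Ioo_mem_nhds htptm (lt_add_one _)
      filter_upwards [hnb] with t ht
      rcases le_total t (q u).2 with h | h
      · exact hmono2.monotoneOn ⟨le_of_lt ht.1, h⟩ ⟨le_of_lt htptm, le_refl _⟩ h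
      · exact hmono3.antitoneOn ⟨le_refl _, le_of_lt (lt_add_one _)⟩
          ⟨h, le_of_lt ht.2⟩ h
    · -- characterization of the critical points
      intro t ht
      rw [hderiv_eq u hu t ht]
      constructor
      · intro h
        rcases div_eq_zero_iff.mp h with hnum | hden
        · have hβt : Hfun I1 α (t • u) = β := by
            rw [hβdef]; linarith
          exact huniq t ht hβt
        · exfalso
          have h1 : (0:ℝ) < t ^ (α + 1) := Real.rpow_pos_of_pos ht _
          have h2 : (0:ℝ) < t ^ (α + 1) * I2 u := mul_pos h1 hI2u
          rw [hden] at h2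
          exact lt_irrefl 0 h2
      · rintro (rfl | rfl)
        · rw [hgtp, hβdef]
          simp
        · rw [hgtm, hβdef]
          simp
  · -- bounded away from 0 on the sphere
    refine ⟨δ, hδ0, fun u hu => ?_⟩
    have hu1 : ‖u‖ = 1 := by simpa using hu
    have hune : u ≠ 0 := by
      intro h
      rw [h] at hu1
      simp at hu1
    obtain ⟨htp0, htps, hstm, hgtp, hgtm, _⟩ := hq u hune
    have key : ∀ t : ℝ, 0 < t → Hfun I1 α (t • u) = β → δ ≤ t := by
      intro t ht h
      by_contra hlt
      push_neg at hlt
      have hn : ‖t • u‖ < δ := by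
        rw [norm_smul, hu1, mul_one, Real.norm_eq_abs, abs_of_pos ht]
        exact hlt
      exact absurd h (ne_of_lt (hδ _ hn))
    exact ⟨key _ htp0 hgtp, key _ (lt_trans htp0 (lt_trans htps hstm)) hgtm⟩
  · -- bounded above on compact subsets of the sphere
    intro K hK hKc
    have hKsub : K ⊆ {u : X | u ≠ 0} := by
      intro u hu
      have h1 : ‖u‖ = 1 := by simpa using hK hu
      intro h
      rw [h] at h1
      simp at h1
    have hKw : IsCompact (toWeakSpace ℝ X '' K) := by
      have : Continuous fun x : X => toWeakSpace ℝ X x := by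
        have := (toWeakSpaceCLM ℝ X).continuous
        simpa [funext fun x => (toWeakSpaceCLM_eq_toWeakSpace (𝕜 := ℝ) (E := X) x)] using this
      exact hKc.image this
    obtain ⟨T, hTK⟩ := hF1unif K hKsub hKw β
    refine ⟨T, fun u hu => ?_⟩
    obtain ⟨htp0, htps, hstm, hgtp, hgtm, _⟩ := hq u (hKsub hu)
    have htm : (q u).2 < T := by
      by_contra h
      push_neg at h
      exact absurd hgtm (ne_of_lt (hTK _ h u hu))
    exact ⟨le_of_lt (lt_trans (lt_trans htps hstm) htm), le_of_lt htm⟩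
  · -- Nehari set bounded away from 0
    have hnt : Nontrivial X := by
      by_contra h
      rw [not_nontrivial_iff_subsingleton] at h
      exact hinf inferInstance
    obtain ⟨u0, hu0⟩ := exists_ne (0 : X)
    obtain ⟨htp0, htps, hstm, hgtp, hgtm, _⟩ := hq u0 hu0
    have hmem : ((q u0).1 • u0) ∈ nehariSet I1 α c := by
      refine ⟨smul_ne_zero (ne_of_gt htp0) hu0, ?_⟩
      rw [hgtp, hβdef]
      simp
    apply lt_of_lt_of_le hδ0
    refine le_csInf ⟨_, Set.mem_image_of_mem _ hmem⟩ ?_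
    rintro y ⟨v, hv, rfl⟩
    by_contra hlt
    push_neg at hlt
    have h1 := hδ v hlt
    obtain ⟨hvne, hveq⟩ := hv
    rw [hβdef] at h1
    linarith
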